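/- arXiv:1405.0530 — 2 statements merged into one kernel-verified Lean document; each statement's English description precedes it below -/
import Mathlib

section
/- Let X_1,…,X_n be i.i.d. random variables on X and fix f ∈ H with ‖f‖_H ≤ R in an RKHS with kernel bound C_k. Let R_T(f) denote the empirical pairwise hinge-loss risk (1/n²) Σ_{i,j: r_i>r_j} L(f(X_i) − f(X_j)) and R_P(f) = E[R_T(f)]. Then for any ε > 0, Prob(|R_T(f) − R_P(f)| ≥ ε) ≤ 2 exp(−ε² n / (2(1 + 2√(C_k) R)²)). -/
open MeasureTheory ProbabilityTheory

open Real

private lemma mcd_core {p : ℝ} (hp0 : 0 ≤ p) (hp1 : p ≤ 1) (h : ℝ) :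
    (1 - p) * Real.exp (-(p * h)) + p * Real.exp ((1 - p) * h) ≤ Real.exp (h ^ 2 / 8) := by
  set v : ℝ → ℝ := fun x => 1 - p + p * Real.exp x with hv_def
  have hv : ∀ x, 0 < v x := by
    intro x
    rcases eq_or_lt_of_le hp0 with h0 | h0
    · simp [hv_def, ← h0]
    · have : 0 < p * Real.exp x := mul_pos h0 (Real.exp_pos x)
      have : (0:ℝ) ≤ 1 - p := by linarith
      simp only [hv_def]; linarith [mul_pos h0 (Real.exp_pos x)]
  set G : ℝ → ℝ := fun x => x ^ 2 / 8 + p * x - Real.log (v x) with hG_def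
  set G' : ℝ → ℝ := fun x => x / 4 + p - p * Real.exp x / v x with hG'_def
  have hvd : ∀ x, HasDerivAt v (p * Real.exp x) x := by
    intro x
    exact ((Real.hasDerivAt_exp x).const_mul p).const_add (1 - p)
  have hGd : ∀ x, HasDerivAt G (G' x) x := by
    intro x
    have h1 : HasDerivAt (fun x : ℝ => x ^ 2 / 8 + p * x) (x / 4 + p) x := by
      have := ((hasDerivAt_pow 2 x).div_const 8).add ((hasDerivAt_id x).const_mul p)
      exact this.congr_deriv (by ring)
    have h2 : HasDerivAt (fun x => Real.log (v x)) (p * Real.exp x / v x) x :=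
      (hvd x).log (hv x).ne'
    exact h1.sub h2
  have hG'd : ∀ x, HasDerivAt G'
      (1 / 4 - (p * Real.exp x * v x - p * Real.exp x * (p * Real.exp x)) / (v x) ^ 2) x := by
    intro x
    have h1 : HasDerivAt (fun x : ℝ => x / 4 + p) (1 / 4) x := by
      simpa using ((hasDerivAt_id x).div_const 4).add_const p
    have h2 : HasDerivAt (fun x => p * Real.exp x / v x)
        ((p * Real.exp x * v x - p * Real.exp x * (p * Real.exp x)) / (v x) ^ 2) x :=
      ((Real.hasDerivAt_exp x).const_mul p).div (hvd x) (hv x).ne'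
    exact h1.sub h2
  have hG'nonneg : ∀ x, 0 ≤ 1 / 4 -
      (p * Real.exp x * v x - p * Real.exp x * (p * Real.exp x)) / (v x) ^ 2 := by
    intro x
    have hvx := hv x
    have hE : 0 ≤ p * Real.exp x := mul_nonneg hp0 (Real.exp_pos x).le
    have hEv : p * Real.exp x ≤ v x := by simp only [hv_def]; linarith
    rw [sub_nonneg, div_le_iff₀ (by positivity)]
    generalize hVV : v x = V at *
    generalize hEE : p * Real.exp x = E at *
    nlinarith [sq_nonneg (V - 2 * E)]
  have hG'mono : Monotone G' := by
    refine monotone_of_deriv_nonneg (fun x => (hG'd x).differentiableAt) fun x => ?_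
    rw [(hG'd x).deriv]; exact hG'nonneg x
  have hG'0 : G' 0 = 0 := by
    simp only [hG'_def, hv_def, Real.exp_zero, mul_one]
    field_simp
    ring
  have hG0 : G 0 = 0 := by
    simp [hG_def, hv_def]
  have hGnonneg : ∀ x, 0 ≤ G x := by
    intro x
    rcases le_total 0 x with hx | hx
    · have hmono : MonotoneOn G (Set.Ici 0) := by
        refine monotoneOn_of_deriv_nonneg (convex_Ici 0)
          (fun y _ => ((hGd y).differentiableAt).continuousAt.continuousWithinAt)
          (fun y _ => (hGd y).differentiableAt.differentiableWithinAt) fun y hy => ?_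
        rw [(hGd y).deriv]
        rw [interior_Ici] at hy
        have : G' 0 ≤ G' y := hG'mono (le_of_lt hy)
        linarith [hG'0 ▸ this]
      have := hmono (Set.self_mem_Ici) (Set.mem_Ici.2 hx) hx
      linarith [hG0 ▸ this]
    · have hanti : AntitoneOn G (Set.Iic 0) := by
        refine antitoneOn_of_deriv_nonpos (convex_Iic 0)
          (fun y _ => ((hGd y).differentiableAt).continuousAt.continuousWithinAt)
          (fun y _ => (hGd y).differentiableAt.differentiableWithinAt) fun y hy => ?_
        rw [(hGd y).deriv]
        rw [interior_Iic] at hy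
        have : G' y ≤ G' 0 := hG'mono (le_of_lt hy)
        linarith [hG'0 ▸ this]
      have := hanti (Set.mem_Iic.2 hx) (Set.self_mem_Iic) hx
      linarith [hG0 ▸ this]
  -- conclude
  have hlog : Real.log (v h) ≤ h ^ 2 / 8 + p * h := by
    have := hGnonneg h; simp only [hG_def] at this; linarith
  have hvle : v h ≤ Real.exp (h ^ 2 / 8 + p * h) :=
    (Real.log_le_iff_le_exp (hv h)).mp hlog
  have key : (1 - p) * Real.exp (-(p * h)) + p * Real.exp ((1 - p) * h)
      = Real.exp (-(p * h)) * v h := by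
    simp only [hv_def]
    rw [show (1 - p) * h = h + -(p*h) by ring, Real.exp_add]
    ring
  rw [key]
  calc Real.exp (-(p * h)) * v h ≤ Real.exp (-(p * h)) * Real.exp (h ^ 2 / 8 + p * h) := by
        exact mul_le_mul_of_nonneg_left hvle (Real.exp_pos _).le
    _ = Real.exp (h ^ 2 / 8) := by rw [← Real.exp_add]; ring_nf

private lemma bdd_integrable {α : Type*} [MeasurableSpace α] (μ : Measure α)
    [IsFiniteMeasure μ] {g : α → ℝ} (hg : Measurable g) {C : ℝ}
    (hC : ∀ x, |g x| ≤ C) : Integrable g μ :=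
  (integrable_const C).mono' hg.aestronglyMeasurable (Filter.Eventually.of_forall hC)

private lemma hoeffding_integral {α : Type*} [MeasurableSpace α] (μ : Measure α)
    [IsProbabilityMeasure μ] {g : α → ℝ} (hg : Measurable g) {a b : ℝ}
    (hab : ∀ x, a ≤ g x ∧ g x ≤ b) (t : ℝ) :
    ∫ x, Real.exp (t * g x) ∂μ ≤ Real.exp (t * ∫ x, g x ∂μ + t ^ 2 * (b - a) ^ 2 / 8) := by
  have hne : Nonempty α := by
    by_contra hcon
    have h1 : μ Set.univ = 1 := measure_univ
    rw [Set.univ_eq_empty_iff.2 (not_nonempty_iff.mp hcon), measure_empty] at h1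
    exact zero_ne_one h1
  obtain ⟨x₀⟩ := hne
  have hba : a ≤ b := le_trans (hab x₀).1 (hab x₀).2
  have habs : ∀ x, |g x| ≤ max |a| |b| := by
    intro x
    rcases le_total 0 (g x) with h0 | h0
    · rw [abs_of_nonneg h0]
      exact le_trans (le_trans (hab x).2 (le_abs_self b)) (le_max_right _ _)
    · rw [abs_of_nonpos h0]
      exact le_trans (le_trans (neg_le_neg (hab x).1) (neg_le_abs a)) (le_max_left _ _)
  have hIg : Integrable g μ := bdd_integrable μ hg habs
  have hIexp : Integrable (fun x => Real.exp (t * g x)) μ := by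
    refine bdd_integrable μ (by fun_prop) (C := Real.exp (|t| * max |a| |b|)) fun x => ?_
    rw [abs_of_nonneg (Real.exp_pos _).le, Real.exp_le_exp]
    calc t * g x ≤ |t * g x| := le_abs_self _
      _ = |t| * |g x| := abs_mul t (g x)
      _ ≤ |t| * max |a| |b| := mul_le_mul_of_nonneg_left (habs x) (abs_nonneg t)
  set m := ∫ x, g x ∂μ with hm_def
  have ham : a ≤ m := by
    have := integral_mono (integrable_const a) hIg fun x => (hab x).1
    simpa using this
  have hmb : m ≤ b := by
    have := integral_mono hIg (integrable_const b) fun x => (hab x).2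
    simpa using this
  rcases eq_or_lt_of_le hba with heq | hlt
  · -- a = b : g is constant
    have hg' : ∀ x, g x = a := fun x => le_antisymm ((hab x).2.trans_eq heq.symm) (hab x).1
    have hm : m = a := by
      rw [hm_def]
      have : g = fun _ => a := funext hg'
      rw [this]; simp
    simp only [hg', hm, ← heq]
    simp
  · -- a < b
    have hband : (0:ℝ) < b - a := by linarith
    set c1 := (Real.exp (t * b) - Real.exp (t * a)) / (b - a) with hc1
    set c2 := (b * Real.exp (t * a) - a * Real.exp (t * b)) / (b - a) with hc2
    have hpt : ∀ x, Real.exp (t * g x) ≤ c1 * g x + c2 := by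
      intro x
      have hw1 : (0:ℝ) ≤ (b - g x) / (b - a) := div_nonneg (by linarith [(hab x).2]) hband.le
      have hw2 : (0:ℝ) ≤ (g x - a) / (b - a) := div_nonneg (by linarith [(hab x).1]) hband.le
      have hws : (b - g x) / (b - a) + (g x - a) / (b - a) = 1 := by field_simp; ring
      have := convexOn_exp.2 (Set.mem_univ (t * a)) (Set.mem_univ (t * b)) hw1 hw2 hws
      have hcomb : ((b - g x) / (b - a)) • (t * a) + ((g x - a) / (b - a)) • (t * b) = t * g x := by
        simp only [smul_eq_mul]; field_simp; ring
      rw [hcomb] at this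
      simp only [smul_eq_mul] at this
      calc Real.exp (t * g x)
          ≤ (b - g x) / (b - a) * Real.exp (t * a) + (g x - a) / (b - a) * Real.exp (t * b) :=
            this
        _ = c1 * g x + c2 := by rw [hc1, hc2]; field_simp; ring
    have hIrhs : Integrable (fun x => c1 * g x + c2) μ :=
      (hIg.const_mul c1).add (integrable_const c2)
    have hstep1 : ∫ x, Real.exp (t * g x) ∂μ ≤ c1 * m + c2 := by
      calc ∫ x, Real.exp (t * g x) ∂μ ≤ ∫ x, (c1 * g x + c2) ∂μ :=
            integral_mono hIexp hIrhs hpt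
        _ = c1 * m + c2 := by
            rw [integral_add (hIg.const_mul c1) (integrable_const c2), integral_const_mul]
            simp [hm_def]
    set p := (m - a) / (b - a) with hp_def
    have hp0 : 0 ≤ p := div_nonneg (by linarith) hband.le
    have hp1 : p ≤ 1 := (div_le_one hband).2 (by linarith)
    set h := t * (b - a) with hh_def
    have e1 : Real.exp (t * m) * Real.exp (-(p * h)) = Real.exp (t * a) := by
      rw [← Real.exp_add]; congr 1
      rw [hp_def, hh_def]; field_simp; ring
    have e2 : Real.exp (t * m) * Real.exp ((1 - p) * h) = Real.exp (t * b) := by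
      rw [← Real.exp_add]; congr 1
      rw [hp_def, hh_def]; field_simp; ring
    have hEq : c1 * m + c2 = (1 - p) * Real.exp (t * a) + p * Real.exp (t * b) := by
      rw [hc1, hc2, hp_def]; field_simp; ring
    have hEq2 : (1 - p) * Real.exp (t * a) + p * Real.exp (t * b) =
        Real.exp (t * m) * ((1 - p) * Real.exp (-(p * h)) + p * Real.exp ((1 - p) * h)) := by
      rw [mul_add, ← e1, ← e2]; ring
    have hcore := mcd_core hp0 hp1 h
    calc ∫ x, Real.exp (t * g x) ∂μ ≤ c1 * m + c2 := hstep1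
      _ = Real.exp (t * m) * ((1 - p) * Real.exp (-(p * h)) + p * Real.exp ((1 - p) * h)) :=
          hEq.trans hEq2
      _ ≤ Real.exp (t * m) * Real.exp (h ^ 2 / 8) :=
          mul_le_mul_of_nonneg_left hcore (Real.exp_pos _).le
      _ = Real.exp (t * m + t ^ 2 * (b - a) ^ 2 / 8) := by
          rw [← Real.exp_add, hh_def]; ring_nf

private lemma insertNth_eq_off_zero {n : ℕ} {𝒳 : Type*} (y y' : 𝒳) (z : Fin n → 𝒳) :
    ∀ j : Fin (n + 1), j ≠ 0 →
      Fin.insertNth (α := fun _ => 𝒳) 0 y z j = Fin.insertNth (α := fun _ => 𝒳) 0 y' z j := by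
  intro j hj
  obtain ⟨j', rfl⟩ := Fin.exists_succAbove_eq (show j ≠ (0 : Fin (n+1)) from hj)
  rw [Fin.insertNth_apply_succAbove, Fin.insertNth_apply_succAbove]

private lemma insertNth_eq_off_succAbove {n : ℕ} {𝒳 : Type*} (y : 𝒳) (z z' : Fin n → 𝒳)
    (i : Fin n) (hz : ∀ j, j ≠ i → z j = z' j) :
    ∀ j : Fin (n + 1), j ≠ (0 : Fin (n+1)).succAbove i →
      Fin.insertNth (α := fun _ => 𝒳) 0 y z j = Fin.insertNth (α := fun _ => 𝒳) 0 y z' j := by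
  intro j hj
  rcases eq_or_ne j 0 with rfl | hj0
  · rw [Fin.insertNth_apply_same, Fin.insertNth_apply_same]
  · obtain ⟨j', rfl⟩ := Fin.exists_succAbove_eq (show j ≠ (0 : Fin (n+1)) from hj0)
    rw [Fin.insertNth_apply_succAbove, Fin.insertNth_apply_succAbove]
    exact hz j' fun hji => hj (by rw [hji])

private lemma abs_int_le {α : Type*} [MeasurableSpace α] (μ : Measure α) (f : α → ℝ) :
    |∫ x, f x ∂μ| ≤ ∫ x, |f x| ∂μ := by
  simpa [Real.norm_eq_abs] using norm_integral_le_integral_norm (μ := μ) f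

private lemma mcdiarmid_mgf {𝒳 : Type*} [MeasurableSpace 𝒳] (P : Measure 𝒳)
    [IsProbabilityMeasure P] :
    ∀ (n : ℕ) (F : (Fin n → 𝒳) → ℝ), Measurable F → ∀ (c M : ℝ),
      (∀ x, |F x| ≤ M) →
      (∀ (x x' : Fin n → 𝒳) (i : Fin n), (∀ j, j ≠ i → x j = x' j) → |F x - F x'| ≤ c) →
      ∀ t : ℝ, ∫ x, Real.exp (t * F x) ∂(Measure.pi fun _ : Fin n => P) ≤
        Real.exp (t * ∫ x, F x ∂(Measure.pi fun _ : Fin n => P) + t ^ 2 * n * c ^ 2 / 8) := by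
  intro n
  induction n with
  | zero =>
    intro F hF c M hM hbd t
    have hFconst : F = fun _ => F default :=
      funext fun x => congrArg F (Subsingleton.elim x default)
    rw [hFconst]
    simp
  | succ n ih =>
    intro F hF c M hM hbd t
    have hne : Nonempty 𝒳 := by
      by_contra hcon
      have h1 : P Set.univ = 1 := measure_univ
      rw [Set.univ_eq_empty_iff.2 (not_nonempty_iff.mp hcon), measure_empty] at h1
      exact zero_ne_one h1
    obtain ⟨y₀⟩ := hne
    set Pi1 := Measure.pi fun _ : Fin (n+1) => P with hPi1
    set Pin := Measure.pi fun _ : Fin n => P with hPin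
    set e := MeasurableEquiv.piFinSuccAbove (fun _ : Fin (n+1) => 𝒳) 0 with he
    have mp : MeasurePreserving e Pi1 (P.prod Pin) :=
      MeasureTheory.measurePreserving_piFinSuccAbove (fun _ : Fin (n+1) => P) 0
    set H : 𝒳 × (Fin n → 𝒳) → ℝ := fun q => F (e.symm q) with hH
    have hHmeas : Measurable H := hF.comp e.symm.measurable
    have hHbd : ∀ q, |H q| ≤ M := fun q => hM _
    have h0M : (0:ℝ) ≤ M := le_trans (abs_nonneg _) (hM fun _ => y₀)
    have hesymm : ∀ (y : 𝒳) (z : Fin n → 𝒳), e.symm (y, z) = Fin.insertNth (α := fun _ => 𝒳) 0 y z := by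
      intro y z; rw [he]; rfl
    have hH1 : ∀ (y y' : 𝒳) (z : Fin n → 𝒳), |H (y, z) - H (y', z)| ≤ c := by
      intro y y' z
      simp only [hH, hesymm]
      exact hbd _ _ 0 fun j hj => insertNth_eq_off_zero y y' z j hj
    have hH2 : ∀ (y : 𝒳) (z z' : Fin n → 𝒳) (i : Fin n), (∀ j, j ≠ i → z j = z' j) →
        |H (y, z) - H (y, z')| ≤ c := by
      intro y z z' i hz
      simp only [hH, hesymm]
      exact hbd _ _ ((0 : Fin (n+1)).succAbove i)
        fun j hj => insertNth_eq_off_succAbove y z z' i hz j hj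
    have hexpHmeas : Measurable fun q => Real.exp (t * H q) := by fun_prop
    have hIexpH : Integrable (fun q => Real.exp (t * H q)) (P.prod Pin) := by
      refine (integrable_const (Real.exp (|t| * M))).mono'
        hexpHmeas.aestronglyMeasurable (Filter.Eventually.of_forall fun q => ?_)
      rw [Real.norm_eq_abs, abs_of_nonneg (Real.exp_pos _).le, Real.exp_le_exp]
      calc t * H q ≤ |t * H q| := le_abs_self _
        _ = |t| * |H q| := abs_mul _ _
        _ ≤ |t| * M := mul_le_mul_of_nonneg_left (hHbd q) (abs_nonneg t)
    have hIH : Integrable H (P.prod Pin) :=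
      (integrable_const M).mono' hHmeas.aestronglyMeasurable
        (Filter.Eventually.of_forall fun q => hHbd q)
    set m : (Fin n → 𝒳) → ℝ := fun z => ∫ y, H (y, z) ∂P with hm
    have hmmeas : Measurable m :=
      (hHmeas.stronglyMeasurable.integral_prod_left').measurable
    have hmsecmeas : ∀ z, Measurable fun y => H (y, z) := fun z =>
      hHmeas.comp (measurable_id.prodMk measurable_const)
    have hIsec : ∀ z, Integrable (fun y => H (y, z)) P := fun z =>
      (integrable_const M).mono' (hmsecmeas z).aestronglyMeasurable
        (Filter.Eventually.of_forall fun y => hHbd (y, z))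
    have hmbd : ∀ z, |m z| ≤ M := by
      intro z
      refine (abs_int_le _ _).trans ?_
      calc ∫ y, |H (y, z)| ∂P ≤ ∫ _, M ∂P :=
            integral_mono (hIsec z).abs (integrable_const M) fun y => hHbd (y, z)
        _ = M := by simp
    have hmdiff : ∀ (z z' : Fin n → 𝒳) (i : Fin n), (∀ j, j ≠ i → z j = z' j) →
        |m z - m z'| ≤ c := by
      intro z z' i hz
      have hsub : m z - m z' = ∫ y, (H (y, z) - H (y, z')) ∂P := by
        rw [hm]; exact (integral_sub (hIsec z) (hIsec z')).symm
      rw [hsub]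
      refine (abs_int_le _ _).trans ?_
      calc ∫ y, |H (y, z) - H (y, z')| ∂P ≤ ∫ _, c ∂P :=
            integral_mono ((hIsec z).sub (hIsec z')).abs (integrable_const c)
              fun y => hH2 y z z' i hz
        _ = c := by simp
    -- inner Hoeffding bound
    have hinner : ∀ z, ∫ y, Real.exp (t * H (y, z)) ∂P ≤
        Real.exp (t * m z + t ^ 2 * c ^ 2 / 8) := by
      intro z
      set g : 𝒳 → ℝ := fun y => H (y, z) with hg
      have hbddbelow : BddBelow (Set.range g) := by
        refine ⟨g y₀ - c, fun w hw => ?_⟩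
        obtain ⟨y, rfl⟩ := hw
        have := abs_le.mp (hH1 y₀ y z)
        simp only [hg]
        linarith [this.1]
      set a := sInf (Set.range g) with ha
      have hag : ∀ y, a ≤ g y := fun y => csInf_le hbddbelow ⟨y, rfl⟩
      have hgb : ∀ y, g y ≤ a + c := by
        intro y
        have : g y - c ≤ a := by
          refine le_csInf ⟨g y₀, ⟨y₀, rfl⟩⟩ fun w hw => ?_
          obtain ⟨y', rfl⟩ := hw
          have := abs_le.mp (hH1 y y' z)
          simp only [hg] at *
          linarith [this.2]
        linarith
      have hhoef := hoeffding_integral P (hmsecmeas z) (a := a) (b := a + c)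
        (fun y => ⟨hag y, hgb y⟩) t
      simpa using hhoef
    -- Fubini
    have hLHS : ∫ x, Real.exp (t * F x) ∂Pi1 =
        ∫ z, ∫ y, Real.exp (t * H (y, z)) ∂P ∂Pin := by
      have h1 : ∫ x, Real.exp (t * F x) ∂Pi1 = ∫ q, Real.exp (t * H q) ∂(P.prod Pin) := by
        rw [← mp.integral_comp' (fun q => Real.exp (t * H q))]
        congr 1; funext x; simp [hH]
      rw [h1, integral_prod_symm _ hIexpH]
    have hmean : ∫ x, F x ∂Pi1 = ∫ z, m z ∂Pin := by
      have h1 : ∫ x, F x ∂Pi1 = ∫ q, H q ∂(P.prod Pin) := by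
        rw [← mp.integral_comp' H]
        congr 1; funext x; simp [hH]
      rw [h1, integral_prod_symm _ hIH]
    have hImid : Integrable (fun z => ∫ y, Real.exp (t * H (y, z)) ∂P) Pin := by
      refine (integrable_const (Real.exp (|t| * M))).mono'
        (hexpHmeas.stronglyMeasurable.integral_prod_left').aestronglyMeasurable
        (Filter.Eventually.of_forall fun z => ?_)
      rw [Real.norm_eq_abs]
      refine (abs_int_le _ _).trans ?_
      have : ∀ y, |Real.exp (t * H (y, z))| ≤ Real.exp (|t| * M) := by
        intro y
        rw [abs_of_nonneg (Real.exp_pos _).le, Real.exp_le_exp]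
        calc t * H (y, z) ≤ |t * H (y, z)| := le_abs_self _
          _ = |t| * |H (y, z)| := abs_mul _ _
          _ ≤ |t| * M := mul_le_mul_of_nonneg_left (hHbd _) (abs_nonneg t)
      calc ∫ y, |Real.exp (t * H (y, z))| ∂P ≤ ∫ _, Real.exp (|t| * M) ∂P := by
            refine integral_mono ?_ (integrable_const _) this
            refine ((integrable_const (Real.exp (|t| * M))).mono'
              ((hexpHmeas.comp (measurable_id.prodMk measurable_const)).aestronglyMeasurable)
              (Filter.Eventually.of_forall fun y => by
                rw [Real.norm_eq_abs]; exact this y)).abs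
        _ = Real.exp (|t| * M) := by simp
    have hIright : Integrable (fun z => Real.exp (t * m z + t ^ 2 * c ^ 2 / 8)) Pin := by
      refine (integrable_const (Real.exp (|t| * M + t ^ 2 * c ^ 2 / 8))).mono'
        (Real.measurable_exp.comp
          ((hmmeas.const_mul t).add_const (t ^ 2 * c ^ 2 / 8))).aestronglyMeasurable
        (Filter.Eventually.of_forall fun z => ?_)
      rw [Real.norm_eq_abs, abs_of_nonneg (Real.exp_pos _).le, Real.exp_le_exp]
      have : t * m z ≤ |t| * M := by
        calc t * m z ≤ |t * m z| := le_abs_self _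
          _ = |t| * |m z| := abs_mul _ _
          _ ≤ |t| * M := mul_le_mul_of_nonneg_left (hmbd z) (abs_nonneg t)
      linarith
    calc ∫ x, Real.exp (t * F x) ∂Pi1
        = ∫ z, ∫ y, Real.exp (t * H (y, z)) ∂P ∂Pin := hLHS
      _ ≤ ∫ z, Real.exp (t * m z + t ^ 2 * c ^ 2 / 8) ∂Pin :=
          integral_mono hImid hIright hinner
      _ = Real.exp (t ^ 2 * c ^ 2 / 8) * ∫ z, Real.exp (t * m z) ∂Pin := by
          simp_rw [Real.exp_add]
          rw [integral_mul_const]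
          ring
      _ ≤ Real.exp (t ^ 2 * c ^ 2 / 8) *
            Real.exp (t * (∫ z, m z ∂Pin) + t ^ 2 * n * c ^ 2 / 8) := by
          exact mul_le_mul_of_nonneg_left
            (ih m hmmeas c M hmbd hmdiff t) (Real.exp_pos _).le
      _ = Real.exp (t * ∫ x, F x ∂Pi1 + t ^ 2 * (n + 1 : ℕ) * c ^ 2 / 8) := by
          rw [hmean, ← Real.exp_add]
          congr 1
          push_cast
          ring

private lemma chernoff_one {α : Type*} [MeasurableSpace α] (μ : Measure α)
    [IsProbabilityMeasure μ] {Z : α → ℝ} (hZ : Measurable Z) {M : ℝ} (hZbd : ∀ x, |Z x| ≤ M)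
    {K : ℝ} (hK : 0 < K)
    (hmgf : ∀ t : ℝ, ∫ x, Real.exp (t * Z x) ∂μ ≤ Real.exp (t * ∫ x', Z x' ∂μ + t ^ 2 * K))
    {ε : ℝ} (hε : 0 < ε) :
    (μ {x | ε ≤ Z x - ∫ x', Z x' ∂μ}).toReal ≤ Real.exp (-(ε ^ 2) / (4 * K)) := by
  set EZ := ∫ x', Z x' ∂μ with hEZ
  set t := ε / (2 * K) with ht
  have ht0 : 0 ≤ t := le_of_lt (div_pos hε (by linarith))
  have hint : Integrable (fun x => Real.exp (t * (Z x - EZ))) μ := by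
    refine (integrable_const (Real.exp (|t| * (M + |EZ|)))).mono'
      (Real.measurable_exp.comp ((hZ.sub_const EZ).const_mul t)).aestronglyMeasurable
      (Filter.Eventually.of_forall fun x => ?_)
    rw [Real.norm_eq_abs, abs_of_nonneg (Real.exp_pos _).le, Real.exp_le_exp]
    calc t * (Z x - EZ) ≤ |t * (Z x - EZ)| := le_abs_self _
      _ = |t| * |Z x - EZ| := abs_mul _ _
      _ ≤ |t| * (M + |EZ|) := by
          refine mul_le_mul_of_nonneg_left ?_ (abs_nonneg t)
          calc |Z x - EZ| ≤ |Z x| + |EZ| := abs_sub _ _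
            _ ≤ M + |EZ| := by linarith [hZbd x]
  have hcher := measure_ge_le_exp_mul_mgf (μ := μ) (X := fun x => Z x - EZ) ε ht0 hint
  have hmgfle : mgf (fun x => Z x - EZ) μ t ≤ Real.exp (t ^ 2 * K) := by
    have h1 : mgf (fun x => Z x - EZ) μ t =
        Real.exp (-(t * EZ)) * ∫ x, Real.exp (t * Z x) ∂μ := by
      rw [mgf, ← integral_const_mul]
      congr 1; funext x; rw [← Real.exp_add]; ring_nf
    rw [h1]
    calc Real.exp (-(t * EZ)) * ∫ x, Real.exp (t * Z x) ∂μ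
        ≤ Real.exp (-(t * EZ)) * Real.exp (t * EZ + t ^ 2 * K) :=
          mul_le_mul_of_nonneg_left (hmgf t) (Real.exp_pos _).le
      _ = Real.exp (t ^ 2 * K) := by rw [← Real.exp_add]; ring_nf
  calc (μ {x | ε ≤ Z x - EZ}).toReal
      ≤ Real.exp (-t * ε) * mgf (fun x => Z x - EZ) μ t := hcher
    _ ≤ Real.exp (-t * ε) * Real.exp (t ^ 2 * K) :=
        mul_le_mul_of_nonneg_left hmgfle (Real.exp_pos _).le
    _ = Real.exp (-(ε ^ 2) / (4 * K)) := by
        rw [← Real.exp_add]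
        congr 1
        rw [ht]
        field_simp
        ring

/-- Concentration of the empirical pairwise hinge-loss risk of a fixed RKHS
function `f` with `‖f‖_H ≤ R`:
`Prob(|R_T(f) − R_P(f)| ≥ ε) ≤ 2 exp(−ε²n / (2(1+2√C_k R)²))`. -/
theorem stmt5 (𝒳 : Type*) [MeasurableSpace 𝒳] (n : ℕ) (hn : 0 < n)
    (Ω : Type*) [MeasureSpace Ω] [IsProbabilityMeasure (ℙ : Measure Ω)]
    (X : Fin n → Ω → 𝒳) (hXmeas : ∀ i, Measurable (X i))
    (hindep : iIndepFun X ℙ)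
    (P : Measure 𝒳) (hlaw : ∀ i, Measure.map (X i) ℙ = P)
    (f : 𝒳 → ℝ) (hfmeas : Measurable f)
    (Ck R : ℝ) (hCk : 0 ≤ Ck) (hR : 0 ≤ R)
    (hfbd : ∀ x, |f x| ≤ Real.sqrt Ck * R)
    (r : Fin n → ℝ) (L : ℝ → ℝ) (hL : L = fun t => max 0 (1 - t))
    (RT : (Fin n → 𝒳) → ℝ)
    (hRT : RT = fun x => (1 / (n : ℝ) ^ 2) *
      ∑ i, ∑ j, if r j < r i then L (f (x i) - f (x j)) else 0)
    (ε : ℝ) (hε : 0 < ε) :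
    ℙ {ω | ε ≤ |RT (fun i => X i ω) - ∫ ω', RT (fun i => X i ω') ∂ℙ|}
      ≤ ENNReal.ofReal
          (2 * Real.exp (-(ε ^ 2) * n / (2 * (1 + 2 * Real.sqrt Ck * R) ^ 2))) := by
  have hnR : (0:ℝ) < n := Nat.cast_pos.mpr hn
  haveI hPprob : IsProbabilityMeasure P := by
    rw [← hlaw ⟨0, hn⟩]
    exact Measure.isProbabilityMeasure_map (hXmeas _).aemeasurable
  set B : ℝ := 1 + 2 * Real.sqrt Ck * R with hB
  have h2CkR : 0 ≤ 2 * Real.sqrt Ck * R :=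
    mul_nonneg (mul_nonneg (by norm_num) (Real.sqrt_nonneg Ck)) hR
  have hB1 : (1:ℝ) ≤ B := by rw [hB]; linarith
  have hB0 : (0:ℝ) < B := lt_of_lt_of_le one_pos hB1
  -- bounds on the loss terms
  have hterm : ∀ a b : 𝒳, 0 ≤ L (f a - f b) ∧ L (f a - f b) ≤ B := by
    intro a b
    have habsd : |f a - f b| ≤ 2 * Real.sqrt Ck * R := by
      calc |f a - f b| ≤ |f a| + |f b| := abs_sub _ _
        _ ≤ 2 * Real.sqrt Ck * R := by linarith [hfbd a, hfbd b]
    rw [hL]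
    refine ⟨le_max_left _ _, max_le hB0.le ?_⟩
    have := neg_abs_le (f a - f b)
    rw [hB]; linarith
  -- measurability of RT
  have hRTmeas : Measurable RT := by
    rw [hRT]
    refine (Finset.measurable_sum _ fun i _ => Finset.measurable_sum _ fun j _ => ?_).const_mul _
    by_cases hij : r j < r i
    · simp only [hij, if_true]
      rw [hL]
      exact measurable_const.max (measurable_const.sub
        ((hfmeas.comp (measurable_pi_apply i)).sub (hfmeas.comp (measurable_pi_apply j))))
    · simp only [hij, if_false]
      exact measurable_const
  -- boundedness of RT
  have hRTbd : ∀ x, |RT x| ≤ B := by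
    intro x
    rw [hRT]
    have h1 : |∑ i, ∑ j, if r j < r i then L (f (x i) - f (x j)) else 0|
        ≤ ∑ i : Fin n, ∑ j : Fin n, B := by
      refine (Finset.abs_sum_le_sum_abs _ _).trans (Finset.sum_le_sum fun i _ => ?_)
      refine (Finset.abs_sum_le_sum_abs _ _).trans (Finset.sum_le_sum fun j _ => ?_)
      by_cases hij : r j < r i
      · simp only [hij, if_true]
        rw [abs_of_nonneg (hterm (x i) (x j)).1]
        exact (hterm (x i) (x j)).2
      · simp only [hij, if_false, abs_zero]
        exact hB0.le
    rw [abs_mul, abs_of_nonneg (by positivity : (0:ℝ) ≤ 1 / (n:ℝ) ^ 2)]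
    calc 1 / (n:ℝ) ^ 2 * |∑ i, ∑ j, if r j < r i then L (f (x i) - f (x j)) else 0|
        ≤ 1 / (n:ℝ) ^ 2 * ∑ i : Fin n, ∑ j : Fin n, B :=
          mul_le_mul_of_nonneg_left h1 (by positivity)
      _ = B := by
          simp only [Finset.sum_const, Finset.card_univ, Fintype.card_fin, nsmul_eq_mul]
          field_simp
  -- bounded differences of RT
  have hRTdiff : ∀ (x x' : Fin n → 𝒳) (i₀ : Fin n), (∀ j, j ≠ i₀ → x j = x' j) →
      |RT x - RT x'| ≤ 2 * B / n := by
    intro x x' i₀ hxx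
    rw [hRT]
    set T : Fin n → Fin n → ℝ :=
      fun i j => if r j < r i then L (f (x i) - f (x j)) else 0 with hT
    set T' : Fin n → Fin n → ℝ :=
      fun i j => if r j < r i then L (f (x' i) - f (x' j)) else 0 with hT'
    have hdz : ∀ i j, i ≠ i₀ → j ≠ i₀ → T i j - T' i j = 0 := by
      intro i j hi hj
      rw [hT, hT']
      simp only
      rw [hxx i hi, hxx j hj, sub_self]
    have hdb : ∀ i j, |T i j - T' i j| ≤ B := by
      intro i j
      rw [hT, hT']
      simp only
      by_cases hij : r j < r i
      · simp only [hij, if_true]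
        have h1 := hterm (x i) (x j)
        have h2 := hterm (x' i) (x' j)
        rw [abs_le]
        constructor <;> linarith
      · simp only [hij, if_false, sub_zero, abs_zero]
        exact hB0.le
    have key : |∑ i, ∑ j, T i j - ∑ i, ∑ j, T' i j| ≤ 2 * n * B := by
      rw [← Finset.sum_sub_distrib]
      simp_rw [← Finset.sum_sub_distrib]
      refine (Finset.abs_sum_le_sum_abs _ _).trans ?_
      have hstep : ∀ i : Fin n, |∑ j, (T i j - T' i j)| ≤
          ∑ j : Fin n, ((if i = i₀ then B else 0) + (if j = i₀ then B else 0)) := by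
        intro i
        refine (Finset.abs_sum_le_sum_abs _ _).trans (Finset.sum_le_sum fun j _ => ?_)
        by_cases hi : i = i₀
        · simp only [hi, if_true]
          have := hdb i j
          rw [hi] at this
          linarith [(by positivity : (0:ℝ) ≤ if j = i₀ then B else 0), this]
        · by_cases hj : j = i₀
          · simp only [hi, hj, if_true, if_false]
            have := hdb i j
            rw [hj] at this
            linarith
          · rw [hdz i j hi hj, abs_zero]
            simp only [hi, hj, if_false]
            norm_num
      refine (Finset.sum_le_sum fun i _ => hstep i).trans ?_
      have hsum1 : ∑ i : Fin n, ∑ _j : Fin n, (if i = i₀ then B else 0) = (n:ℝ) * B := by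
        calc ∑ i : Fin n, ∑ _j : Fin n, (if i = i₀ then B else 0)
            = ∑ i : Fin n, (n : ℝ) * (if i = i₀ then B else 0) := by
              refine Finset.sum_congr rfl fun i _ => ?_
              simp [Finset.sum_const, Finset.card_univ]
          _ = (n:ℝ) * B := by
              rw [← Finset.mul_sum, Finset.sum_ite_eq' Finset.univ i₀ (fun _ => B)]
              simp
      have hsum2 : ∑ _i : Fin n, ∑ j : Fin n, (if j = i₀ then B else 0) = (n:ℝ) * B := by
        calc ∑ _i : Fin n, ∑ j : Fin n, (if j = i₀ then B else 0)
            = ∑ _i : Fin n, B := by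
              refine Finset.sum_congr rfl fun i _ => ?_
              rw [Finset.sum_ite_eq' Finset.univ i₀ (fun _ => B)]
              simp
          _ = (n:ℝ) * B := by simp [Finset.sum_const, Finset.card_univ, mul_comm]
      simp only [Finset.sum_add_distrib]
      rw [hsum1, hsum2]
      linarith
    calc |1 / (n:ℝ) ^ 2 * (∑ i, ∑ j, T i j) - 1 / (n:ℝ) ^ 2 * (∑ i, ∑ j, T' i j)|
        = 1 / (n:ℝ) ^ 2 * |∑ i, ∑ j, T i j - ∑ i, ∑ j, T' i j| := by
          rw [← mul_sub, abs_mul, abs_of_nonneg (by positivity : (0:ℝ) ≤ 1 / (n:ℝ) ^ 2)]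
      _ ≤ 1 / (n:ℝ) ^ 2 * (2 * n * B) := mul_le_mul_of_nonneg_left key (by positivity)
      _ = 2 * B / n := by field_simp
  -- joint law is the product measure
  set Pn : Measure (Fin n → 𝒳) := Measure.pi fun _ : Fin n => P with hPndef
  have hjmeas : Measurable (fun ω => fun i => X i ω) :=
    measurable_pi_lambda _ hXmeas
  have hmap : Measure.map (fun ω => fun i => X i ω) ℙ = Pn := by
    rw [hPndef]
    refine Eq.symm (Measure.pi_eq (μ := fun _ : Fin n => P) fun s hs => ?_)
    rw [Measure.map_apply hjmeas (MeasurableSet.univ_pi hs)]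
    have hpre : (fun ω => fun i => X i ω) ⁻¹' Set.pi Set.univ s
        = ⋂ i ∈ Finset.univ, X i ⁻¹' s i := by
      ext ω
      simp [Set.mem_pi]
    rw [hpre, hindep.measure_inter_preimage_eq_mul Finset.univ (fun i _ => hs i)]
    exact Finset.prod_congr rfl fun i _ => by
      rw [← hlaw i, Measure.map_apply (hXmeas i) (hs i)]
  -- transfer the integral
  have hEeq : ∫ ω', RT (fun i => X i ω') ∂ℙ = ∫ x, RT x ∂Pn := by
    rw [← hmap, integral_map hjmeas.aemeasurable]
    rw [hmap]
    exact hRTmeas.aestronglyMeasurable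
  set I : ℝ := ∫ x, RT x ∂Pn with hI
  -- transfer the probability
  have hprob : ∀ (S : Set (Fin n → 𝒳)), MeasurableSet S →
      ℙ ((fun ω => fun i => X i ω) ⁻¹' S) = Pn S := by
    intro S hS
    rw [← hmap, Measure.map_apply hjmeas hS]
  -- mgf bound from McDiarmid
  set K : ℝ := B ^ 2 / (2 * n) with hK
  have hKpos : 0 < K := by positivity
  have hmgf : ∀ t : ℝ, ∫ x, Real.exp (t * RT x) ∂Pn ≤ Real.exp (t * I + t ^ 2 * K) := by
    intro t
    have := mcdiarmid_mgf P n RT hRTmeas (2 * B / n) B hRTbd hRTdiff t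
    have heq : t ^ 2 * n * (2 * B / n) ^ 2 / 8 = t ^ 2 * K := by
      rw [hK]; field_simp; ring
    rw [heq] at this
    exact this
  -- mgf bound for -RT
  have hmgfneg : ∀ t : ℝ, ∫ x, Real.exp (t * (-RT x)) ∂Pn ≤
      Real.exp (t * ∫ x, (-RT x) ∂Pn + t ^ 2 * K) := by
    intro t
    have hInt : Integrable RT Pn :=
      (integrable_const B).mono' hRTmeas.aestronglyMeasurable
        (Filter.Eventually.of_forall fun x => hRTbd x)
    rw [integral_neg]
    have := hmgf (-t)
    simp only [neg_mul, mul_neg, neg_neg] at this ⊢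
    calc ∫ x, Real.exp (-(t * RT x)) ∂Pn ≤ Real.exp (-t * I + (-t) ^ 2 * K) := by
          simpa [neg_mul] using hmgf (-t)
      _ = Real.exp (-(t * I) + t ^ 2 * K) := by ring_nf
  -- one-sided bounds
  have hup : (Pn {x | ε ≤ RT x - I}).toReal ≤ Real.exp (-(ε ^ 2) / (4 * K)) := by
    have := chernoff_one Pn hRTmeas hRTbd hKpos (by rw [← hI]; exact hmgf) hε
    rw [← hI] at this
    exact this
  have hdown : (Pn {x | ε ≤ I - RT x}).toReal ≤ Real.exp (-(ε ^ 2) / (4 * K)) := by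
    have hnegbd : ∀ x, |(-RT x)| ≤ B := fun x => by rw [abs_neg]; exact hRTbd x
    have := chernoff_one Pn hRTmeas.neg hnegbd hKpos hmgfneg hε
    have hieq : ∫ x', (-RT x') ∂Pn = -I := by rw [integral_neg, hI]
    simp only [Pi.neg_apply] at this
    rw [hieq] at this
    have hseteq : {x | ε ≤ -RT x - -I} = {x | ε ≤ I - RT x} := by
      ext x; simp [sub_eq_add_neg]; constructor <;> intro h <;> linarith
    rw [hseteq] at this
    exact this
  -- exponent identity
  have hexpeq : Real.exp (-(ε ^ 2) / (4 * K)) =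
      Real.exp (-(ε ^ 2) * n / (2 * B ^ 2)) := by
    congr 1
    rw [hK]
    field_simp
    ring
  -- assemble
  have hSmeasA : MeasurableSet {x : Fin n → 𝒳 | ε ≤ RT x - I} :=
    measurableSet_le measurable_const (hRTmeas.sub measurable_const)
  have hSmeasB : MeasurableSet {x : Fin n → 𝒳 | ε ≤ I - RT x} :=
    measurableSet_le measurable_const (measurable_const.sub hRTmeas)
  have hSmeas : MeasurableSet {x : Fin n → 𝒳 | ε ≤ |RT x - I|} :=
    measurableSet_le measurable_const (hRTmeas.sub measurable_const).abs
  have hsetpre : {ω | ε ≤ |RT (fun i => X i ω) - ∫ ω', RT (fun i => X i ω') ∂ℙ|}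
      = (fun ω => fun i => X i ω) ⁻¹' {x | ε ≤ |RT x - I|} := by
    ext ω
    simp [hEeq, hI]
  rw [hsetpre, hprob _ hSmeas]
  have hsub : {x : Fin n → 𝒳 | ε ≤ |RT x - I|} ⊆
      {x | ε ≤ RT x - I} ∪ {x | ε ≤ I - RT x} := by
    intro x hx
    simp only [Set.mem_setOf_eq, Set.mem_union] at *
    rcases abs_cases (RT x - I) with ⟨h1, _⟩ | ⟨h1, _⟩
    · left; linarith
    · right; linarith
  have hofReal : ∀ (S : Set (Fin n → 𝒳)), (Pn S).toReal ≤ Real.exp (-(ε ^ 2) / (4 * K)) →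
      Pn S ≤ ENNReal.ofReal (Real.exp (-(ε ^ 2) / (4 * K))) := by
    intro S hS
    exact (ENNReal.le_ofReal_iff_toReal_le (measure_ne_top Pn S) (Real.exp_pos _).le).mpr hS
  calc Pn {x : Fin n → 𝒳 | ε ≤ |RT x - I|}
      ≤ Pn ({x | ε ≤ RT x - I} ∪ {x | ε ≤ I - RT x}) := measure_mono hsub
    _ ≤ Pn {x | ε ≤ RT x - I} + Pn {x | ε ≤ I - RT x} := measure_union_le _ _
    _ ≤ ENNReal.ofReal (Real.exp (-(ε ^ 2) / (4 * K)))
          + ENNReal.ofReal (Real.exp (-(ε ^ 2) / (4 * K))) :=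
        add_le_add (hofReal _ hup) (hofReal _ hdown)
    _ = ENNReal.ofReal (2 * Real.exp (-(ε ^ 2) * n / (2 * B ^ 2))) := by
        rw [← ENNReal.ofReal_add (Real.exp_pos _).le (Real.exp_pos _).le, hexpeq]
        congr 1
        ring
    _ = ENNReal.ofReal
          (2 * Real.exp (-(ε ^ 2) * n / (2 * (1 + 2 * Real.sqrt Ck * R) ^ 2))) := by
        rw [hB]
end

section
/- (Vapnik symmetrization) Let 𝒳 be a set, S a system of measurable subsets of 𝒳, and P a probability measure. For a sample x ∈ 𝒳^n and A ∈ S define the empirical frequency ν_x(A) = |{i : x_i ∈ A}|/n. If n > 2/ε, then P^n{x : sup_{A∈S} |ν_x(A) − P(A)| > ε} ≤ 2 P^{2n}{(x,x') : sup_{A∈S} |ν_x(A) − ν_{x'}(A)| > ε/2}. -/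
open MeasureTheory

section RealCore


lemma chooseCast (n k : ℕ) (hk : k < n) :
    ((k:ℝ) + 1) * (n.choose (k+1) : ℝ) = ((n:ℝ) - k) * (n.choose k : ℝ) := by
  have h := Nat.choose_succ_right_eq n k
  have h' : ((n.choose (k+1) * (k+1) : ℕ) : ℝ) = ((n.choose k * (n - k) : ℕ) : ℝ) := by
    exact_mod_cast congrArg (Nat.cast (R := ℝ)) h
  push_cast [Nat.cast_sub hk.le] at h'
  linarith

lemma pairL4 (n m i : ℕ) (h2m : n ≤ 2 * m) (hmn : m < n) (hi : i < n - m) :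
    (n.choose (m + 1 + i) : ℝ) * (m : ℝ) ^ (2 * i + 1)
      ≤ (n.choose (m - i) : ℝ) * ((n : ℝ) - m) ^ (2 * i + 1) := by
  induction i with
  | zero =>
    simp only [Nat.add_zero, Nat.sub_zero, mul_zero, zero_add, pow_one]
    have h := chooseCast n m hmn
    have hm0 : (0:ℝ) ≤ m := by positivity
    have hchoose0 : (0:ℝ) ≤ (n.choose (m+1) : ℝ) := by positivity
    nlinarith [h]
  | succ i ih =>
    have hi' : i < n - m := by omega
    have IH := ih hi'
    have hmi : i < m := by omega
    have humR : (0:ℝ) < (n:ℝ) - m := by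
      have : (m:ℝ) < n := by exact_mod_cast hmn
      linarith
    have humi : (0:ℝ) < (n:ℝ) - m - 1 - i := by
      have : ((i:ℝ) + 1 + 1) ≤ ((n - m : ℕ) : ℝ) := by exact_mod_cast hi
      rw [Nat.cast_sub hmn.le] at this
      linarith
    have humR2 : (0:ℝ) ≤ (n:ℝ) - m := humR.le
    have hmR : (0:ℝ) < (m:ℝ) := by
      have : 0 < m := by omega
      exact_mod_cast this
    have hu2m : (n:ℝ) - m ≤ m := by
      have : (n:ℝ) ≤ 2 * m := by exact_mod_cast h2m
      linarith
    have idA : ((m:ℝ) + i + 2) * (n.choose (m+1+i+1) : ℝ)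
        = ((n:ℝ) - m - 1 - i) * (n.choose (m+1+i) : ℝ) := by
      have h := chooseCast n (m+1+i) (by omega)
      have e : ((m+1+i : ℕ) : ℝ) = (m:ℝ) + 1 + i := by push_cast; ring
      rw [e] at h
      linear_combination h
    have idB : ((m:ℝ) - i) * (n.choose (m - i) : ℝ)
        = ((n:ℝ) - m + i + 1) * (n.choose (m - i - 1) : ℝ) := by
      have h := chooseCast n (m - i - 1) (by omega)
      have e1 : m - i - 1 + 1 = m - i := by omega
      rw [e1] at h
      have e2 : ((m - i - 1 : ℕ) : ℝ) = (m:ℝ) - i - 1 := by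
        rw [Nat.cast_sub (by omega : 1 ≤ m - i), Nat.cast_sub (by omega : i ≤ m)]
        push_cast
        ring
      rw [e2] at h
      linear_combination h
    -- gain inequality
    have hgain : ((n:ℝ) - m - 1 - i) * ((n:ℝ) - m + i + 1) * (m:ℝ)^2
        ≤ ((m:ℝ) - i) * ((m:ℝ) + i + 2) * ((n:ℝ) - m)^2 := by
      nlinarith [mul_nonneg (sq_nonneg ((i:ℝ)+1)) (by nlinarith : (0:ℝ) ≤ (m:ℝ)^2 - ((n:ℝ)-m)^2),
        mul_nonneg (sq_nonneg ((n:ℝ)-m)) (by linarith : (0:ℝ) ≤ 2*(m:ℝ)+1)]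
    -- nonnegativity
    have hA0 : (0:ℝ) ≤ (n.choose (m+1+i) : ℝ) * (m:ℝ)^(2*i+1) := by positivity
    have hB0 : (0:ℝ) ≤ (n.choose (m-i) : ℝ) * ((n:ℝ)-m)^(2*i+1) := by positivity
    have hg10 : (0:ℝ) ≤ ((n:ℝ) - m - 1 - i) * ((n:ℝ) - m + i + 1) * (m:ℝ)^2 := by
      have : (0:ℝ) ≤ (n:ℝ) - m + i + 1 := by linarith
      positivity
    have big := mul_le_mul IH hgain hg10 hB0
    -- cancel positive factor
    have hpos : (0:ℝ) < ((m:ℝ) + i + 2) * ((n:ℝ) - m + i + 1) := by positivity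
    have em : (m:ℝ)^(2*(i+1)+1) = (m:ℝ)^(2*i+1) * (m:ℝ)^2 := by
      rw [← pow_add]; congr 1 <;> omega
    have eu : ((n:ℝ)-m)^(2*(i+1)+1) = ((n:ℝ)-m)^(2*i+1) * ((n:ℝ)-m)^2 := by
      rw [← pow_add]; congr 1 <;> omega
    have estep : m + 1 + (i+1) = m + 1 + i + 1 := by omega
    have estep2 : m - (i+1) = m - i - 1 := by omega
    rw [estep, estep2, em, eu]
    refine (mul_le_mul_iff_of_pos_right hpos).mp ?_
    calc (n.choose (m+1+i+1) : ℝ) * ((m:ℝ)^(2*i+1) * (m:ℝ)^2) * (((m:ℝ) + i + 2) * ((n:ℝ) - m + i + 1))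
        = ((n.choose (m+1+i) : ℝ) * (m:ℝ)^(2*i+1)) * (((n:ℝ) - m - 1 - i) * ((n:ℝ) - m + i + 1) * (m:ℝ)^2) := by
          linear_combination ((m:ℝ)^(2*i+1) * (m:ℝ)^2 * ((n:ℝ) - m + i + 1)) * idA
      _ ≤ ((n.choose (m-i) : ℝ) * ((n:ℝ)-m)^(2*i+1)) * (((m:ℝ) - i) * ((m:ℝ) + i + 2) * ((n:ℝ) - m)^2) := big
      _ = (n.choose (m-i-1) : ℝ) * (((n:ℝ)-m)^(2*i+1) * ((n:ℝ)-m)^2) * (((m:ℝ) + i + 2) * ((n:ℝ) - m + i + 1)) := by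
          linear_combination (((n:ℝ)-m)^(2*i+1) * ((n:ℝ)-m)^2 * ((m:ℝ) + i + 2)) * idB


lemma reflR (m k : ℕ) (hm : 1 ≤ m) (hmk : m ≤ k) (σ : ℝ) (h0 : 0 ≤ σ) (h1 : σ ≤ m) :
    ((m : ℝ) - σ) ^ m * ((k : ℝ) + σ) ^ k ≤ ((m : ℝ) + σ) ^ m * ((k : ℝ) - σ) ^ k := by
  have hmR : (0:ℝ) < m := by exact_mod_cast hm
  have hkR : (0:ℝ) < k := lt_of_lt_of_le hmR (by exact_mod_cast hmk)
  have hmkR : (m:ℝ) ≤ k := by exact_mod_cast hmk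
  rcases eq_or_lt_of_le h1 with hEq | hlt
  · -- σ = m : LHS = 0
    rw [hEq, sub_self, zero_pow (by omega : m ≠ 0), zero_mul]
    have h2 : (0:ℝ) ≤ (k:ℝ) - (m:ℝ) := by linarith
    exact mul_nonneg (pow_nonneg (by linarith) m) (pow_nonneg h2 k)
  · -- σ < m
    set φ : ℝ → ℝ := fun y => (m:ℝ) * Real.log ((m:ℝ) + y) - (m:ℝ) * Real.log ((m:ℝ) - y)
      - (k:ℝ) * Real.log ((k:ℝ) + y) + (k:ℝ) * Real.log ((k:ℝ) - y) with hφ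
    set Dv : ℝ → ℝ := fun x => (m:ℝ) * (1 / ((m:ℝ) + x)) + (m:ℝ) * (1 / ((m:ℝ) - x))
      - (k:ℝ) * (1 / ((k:ℝ) + x)) - (k:ℝ) * (1 / ((k:ℝ) - x)) with hDv
    have hderiv : ∀ x : ℝ, 0 ≤ x → x < m → HasDerivAt φ (Dv x) x := by
      intro x hx0 hxm
      have hmp : (0:ℝ) < (m:ℝ) + x := by linarith
      have hmm : (0:ℝ) < (m:ℝ) - x := by linarith
      have hkp : (0:ℝ) < (k:ℝ) + x := by linarith
      have hkm : (0:ℝ) < (k:ℝ) - x := by linarith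
      have h1' : HasDerivAt (fun y : ℝ => Real.log ((m:ℝ) + y)) (1 / ((m:ℝ) + x)) x := by
        have := (((hasDerivAt_id x).const_add (m:ℝ)).log (ne_of_gt hmp))
        simpa using this
      have h2' : HasDerivAt (fun y : ℝ => Real.log ((m:ℝ) - y)) (-1 / ((m:ℝ) - x)) x := by
        have := (((hasDerivAt_id x).const_sub (m:ℝ)).log (ne_of_gt hmm))
        simpa using this
      have h3' : HasDerivAt (fun y : ℝ => Real.log ((k:ℝ) + y)) (1 / ((k:ℝ) + x)) x := by
        have := (((hasDerivAt_id x).const_add (k:ℝ)).log (ne_of_gt hkp))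
        simpa using this
      have h4' : HasDerivAt (fun y : ℝ => Real.log ((k:ℝ) - y)) (-1 / ((k:ℝ) - x)) x := by
        have := (((hasDerivAt_id x).const_sub (k:ℝ)).log (ne_of_gt hkm))
        simpa using this
      have hh := (((h1'.const_mul (m:ℝ)).sub (h2'.const_mul (m:ℝ))).sub
        (h3'.const_mul (k:ℝ))).add (h4'.const_mul (k:ℝ))
      refine hh.congr_deriv ?_
      symm
      rw [hDv]
      field_simp
      ring
    have hmono : MonotoneOn φ (Set.Icc 0 σ) := by
      apply monotoneOn_of_deriv_nonneg (convex_Icc 0 σ)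
      · intro x hx
        exact (hderiv x hx.1 (lt_of_le_of_lt hx.2 hlt)).continuousAt.continuousWithinAt
      · intro x hx
        rw [interior_Icc] at hx
        exact (hderiv x hx.1.le (lt_trans hx.2 hlt)).differentiableAt.differentiableWithinAt
      · intro x hx
        rw [interior_Icc] at hx
        have hx0 : 0 < x := hx.1
        have hxm : x < m := lt_trans hx.2 hlt
        rw [(hderiv x hx0.le hxm).deriv]
        have hmp : (0:ℝ) < (m:ℝ) + x := by linarith
        have hmm : (0:ℝ) < (m:ℝ) - x := by linarith
        have hkp : (0:ℝ) < (k:ℝ) + x := by linarith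
        have hkm : (0:ℝ) < (k:ℝ) - x := by linarith
        have heq : Dv x = 2 * x^2 * ((k:ℝ)^2 - (m:ℝ)^2)
            / (((m:ℝ) + x) * ((m:ℝ) - x) * (((k:ℝ) + x) * ((k:ℝ) - x))) := by
          rw [hDv]
          field_simp
          ring
        rw [heq]
        apply div_nonneg
        · have : (m:ℝ)^2 ≤ (k:ℝ)^2 := by nlinarith
          nlinarith [sq_nonneg x]
        · positivity
    have hφ0 : φ 0 = 0 := by
      rw [hφ]; simp
    have hφσ : 0 ≤ φ σ := by
      rw [← hφ0]
      exact hmono (Set.left_mem_Icc.mpr h0) (Set.mem_Icc.mpr ⟨h0, le_refl σ⟩) h0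
    -- exponentiate
    have hmp : (0:ℝ) < (m:ℝ) + σ := by linarith
    have hmm : (0:ℝ) < (m:ℝ) - σ := by linarith
    have hkp : (0:ℝ) < (k:ℝ) + σ := by linarith
    have hkm : (0:ℝ) < (k:ℝ) - σ := by linarith
    have hlhs : (0:ℝ) < ((m:ℝ) - σ) ^ m * ((k:ℝ) + σ) ^ k := by positivity
    have hrhs : (0:ℝ) < ((m:ℝ) + σ) ^ m * ((k:ℝ) - σ) ^ k := by positivity
    rw [← Real.log_le_log_iff hlhs hrhs, Real.log_mul (by positivity) (by positivity),
      Real.log_mul (by positivity) (by positivity), Real.log_pow, Real.log_pow,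
      Real.log_pow, Real.log_pow]
    have hexp : φ σ = (m:ℝ) * Real.log ((m:ℝ) + σ) - (m:ℝ) * Real.log ((m:ℝ) - σ)
        - (k:ℝ) * Real.log ((k:ℝ) + σ) + (k:ℝ) * Real.log ((k:ℝ) - σ) := by rw [hφ]
    rw [hexp] at hφσ
    push_cast
    linarith


lemma sumDeriv (n m : ℕ) (hmn : m < n) (x : ℝ) :
    HasDerivAt (fun p : ℝ => ∑ j ∈ Finset.Ico (m + 1) (n + 1),
        (n.choose j : ℝ) * p ^ j * (1 - p) ^ (n - j))
      ((n : ℝ) * ((n - 1).choose m) * x ^ m * (1 - x) ^ (n - 1 - m)) x := by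
  obtain ⟨N, rfl⟩ : ∃ N, n = N + 1 := ⟨n - 1, (Nat.succ_pred_eq_of_pos (Nat.pos_of_ne_zero
    (by rintro rfl; exact Nat.not_lt_zero m hmn))).symm⟩
  have hmN : m ≤ N := Nat.lt_succ_iff.mp hmn
  set g : ℕ → ℝ := fun i => ((N:ℝ) + 1) * (N.choose i : ℝ) * x ^ i * (1 - x) ^ (N - i) with hg
  have hderiv : ∀ j ∈ Finset.Ico (m + 1) (N + 1 + 1),
      HasDerivAt (fun p : ℝ => ((N+1).choose j : ℝ) * p ^ j * (1 - p) ^ (N + 1 - j))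
        (g (j - 1) - g j) x := by
    intro j hj
    rw [Finset.mem_Ico] at hj
    obtain ⟨k, rfl⟩ : ∃ k, j = k + 1 := ⟨j - 1, (Nat.succ_pred_eq_of_pos (by omega)).symm⟩
    have hkN : k ≤ N := by omega
    have h1 : HasDerivAt (fun p : ℝ => p ^ (k+1)) (((k:ℝ)+1) * x ^ k) x := by
      simpa using hasDerivAt_pow (k+1) x
    have h2 : HasDerivAt (fun p : ℝ => (1 - p) ^ (N + 1 - (k+1)))
        (((N + 1 - (k+1) : ℕ) : ℝ) * (1 - x) ^ (N + 1 - (k+1) - 1) * (-1)) x :=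
      HasDerivAt.fun_pow ((hasDerivAt_id x).const_sub 1) _
    have h3 := (h1.fun_mul h2).const_mul (((N+1).choose (k+1) : ℝ))
    have hfun : (fun p : ℝ => ((N+1).choose (k+1) : ℝ) * (p ^ (k+1) * (1 - p) ^ (N + 1 - (k+1))))
        = (fun p : ℝ => ((N+1).choose (k+1) : ℝ) * p ^ (k+1) * (1 - p) ^ (N + 1 - (k+1))) := by
      funext p; ring
    rw [hfun] at h3
    have e1 : N + 1 - (k + 1) = N - k := by omega
    have e2 : N + 1 - (k + 1) - 1 = N - k - 1 := by omega
    have id1 : ((k:ℝ) + 1) * ((N+1).choose (k+1) : ℝ) = ((N:ℝ)+1) * (N.choose k : ℝ) := by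
      have h := Nat.add_one_mul_choose_eq N k
      have h' : ((N.succ * N.choose k : ℕ) : ℝ) = ((N.succ.choose k.succ * k.succ : ℕ) : ℝ) := by
        exact_mod_cast congrArg (Nat.cast (R := ℝ)) h
      push_cast at h'
      linarith
    refine h3.congr_deriv ?_
    symm
    simp only [e1, e2, Nat.add_sub_cancel]
    rcases Nat.eq_or_lt_of_le hkN with hEq | hlt
    · subst hEq
      simp only [hg, Nat.sub_self, Nat.choose_succ_self, Nat.choose_self, Nat.cast_zero,
        Nat.cast_one, pow_zero, Nat.add_sub_cancel, mul_one, mul_zero, zero_mul, sub_zero]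
      ring
    · obtain ⟨d, hd⟩ : ∃ d, N - k = d + 1 := ⟨N - k - 1, by omega⟩
      have hNk1 : N - (k+1) = d := by omega
      have id2 : ((N - k : ℕ) : ℝ) * ((N+1).choose (k+1) : ℝ) = ((N:ℝ)+1) * (N.choose (k+1) : ℝ) := by
        have ha := Nat.choose_succ_right_eq (N+1) (k+1)
        have hb := Nat.add_one_mul_choose_eq N (k+1)
        have ha' : ((N+1).choose (k+1+1) * (k+1+1) : ℕ) = ((N+1).choose (k+1) * (N - k) : ℕ) := by
          rw [ha]; congr 1 <;> omega
        have ha'' : (((N+1).choose (k+1+1) : ℝ)) * ((k:ℝ)+2) = (((N+1).choose (k+1) : ℝ)) * ((N - k : ℕ) : ℝ) := by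
          exact_mod_cast congrArg (Nat.cast (R := ℝ)) ha'
        have hb'' : ((N:ℝ)+1) * (N.choose (k+1) : ℝ) = (((N+1).choose (k+1+1) : ℝ)) * ((k:ℝ)+2) := by
          exact_mod_cast congrArg (Nat.cast (R := ℝ)) hb
        rw [hb'', ha'']
        ring
      have id2R : ((d:ℝ) + 1) * ((N+1).choose (k+1) : ℝ) = ((N:ℝ)+1) * (N.choose (k+1) : ℝ) := by
        rw [← id2, hd]; push_cast; ring
      simp only [hg, hNk1, hd, Nat.add_sub_cancel]
      push_cast
      linear_combination (-(x^k*(1-x)^(d+1))) * id1 + (x^(k+1)*(1-x)^d) * id2R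
  have hsum := HasDerivAt.fun_sum hderiv
  refine hsum.congr_deriv ?_
  symm
  rw [Finset.sum_Ico_eq_sum_range]
  have hstep : ∀ i, g (m + 1 + i - 1) - g (m + 1 + i) = (fun i => g (m + i)) i - (fun i => g (m + i)) (i+1) := by
    intro i
    have e : m + 1 + i - 1 = m + i := by omega
    have e2 : m + 1 + i = m + (i + 1) := by omega
    rw [e, e2]
  simp only [hstep]
  rw [Finset.sum_range_sub' (fun i => g (m + i))]
  have hg2 : g (m + (N + 1 + 1 - (m+1))) = 0 := by
    have e : m + (N + 1 + 1 - (m+1)) = N + 1 := by omega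
    rw [e, hg]
    simp [Nat.choose_succ_self]
  rw [hg2, sub_zero, hg]
  have e3 : N + 1 - 1 - m = N - m := by omega
  simp only [Nat.add_sub_cancel, e3]
  push_cast
  ring

lemma refl_pt (n m : ℕ) (hm1 : 1 ≤ m) (h2m : 2 * m ≤ n) (s : ℝ) (hs0 : 0 ≤ s)
    (hsc : s ≤ (m:ℝ)/n) :
    ((m:ℝ)/n - s) ^ m * (1 - ((m:ℝ)/n - s)) ^ (n - 1 - m)
      ≤ ((m:ℝ)/n + s) ^ m * (1 - ((m:ℝ)/n + s)) ^ (n - 1 - m) := by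
  have hn0 : 0 < n := by omega
  have hnR : (0:ℝ) < n := by exact_mod_cast hn0
  have h2mR : 2 * (m:ℝ) ≤ n := by exact_mod_cast h2m
  set t1 := (m:ℝ)/n - s with ht1
  set t2 := (m:ℝ)/n + s with ht2
  have ht10 : 0 ≤ t1 := by rw [ht1]; linarith
  have ht12 : t1 ≤ t2 := by rw [ht1, ht2]; linarith
  have hhalf : (m:ℝ)/n ≤ 1/2 := by
    rw [div_le_div_iff₀ hnR two_pos]; linarith
  have ht21 : t2 ≤ 1 := by
    rw [ht2]
    have hsc' : s ≤ 1/2 := le_trans hsc hhalf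
    linarith
  have h1t1 : 0 ≤ 1 - t1 := by rw [ht1]; linarith [hsc, hhalf]
  have h1t2 : 0 ≤ 1 - t2 := by linarith
  -- the (n-m) exponent inequality from reflR
  have hS : t1 ^ m * (1 - t1) ^ (n - m) ≤ t2 ^ m * (1 - t2) ^ (n - m) := by
    set σ := (n:ℝ) * s with hσ
    have hσ0 : 0 ≤ σ := by positivity
    have hσm : σ ≤ m := by
      rw [hσ]
      calc (n:ℝ) * s ≤ (n:ℝ) * ((m:ℝ)/n) := by
            exact mul_le_mul_of_nonneg_left hsc (le_of_lt hnR)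
        _ = m := by field_simp
    have hmk : m ≤ n - m := by omega
    have hR := reflR m (n - m) hm1 hmk σ hσ0 hσm
    have hkR : ((n - m : ℕ) : ℝ) = (n:ℝ) - m := by
      rw [Nat.cast_sub (by omega)]
    rw [hkR] at hR
    have e1 : t1 = ((m:ℝ) - σ)/n := by rw [ht1, hσ]; field_simp
    have e2 : 1 - t1 = ((n:ℝ) - m + σ)/n := by rw [ht1, hσ]; field_simp; ring
    have e3 : t2 = ((m:ℝ) + σ)/n := by rw [ht2, hσ]; field_simp
    have e4 : 1 - t2 = ((n:ℝ) - m - σ)/n := by rw [ht2, hσ]; field_simp; ring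
    rw [e2, e4, e1, e3, div_pow, div_pow, div_pow, div_pow]
    rw [div_mul_div_comm, div_mul_div_comm]
    apply div_le_div_of_nonneg_right ?_ (by positivity)
    · calc ((m:ℝ) - σ) ^ m * ((n:ℝ) - m + σ) ^ (n - m)
          = ((m:ℝ) - σ) ^ m * (((n:ℝ) - m) + σ) ^ (n - m) := by ring_nf
        _ ≤ ((m:ℝ) + σ) ^ m * (((n:ℝ) - m) - σ) ^ (n - m) := hR
        _ = ((m:ℝ) + σ) ^ m * ((n:ℝ) - m - σ) ^ (n - m) := by ring_nf
  by_cases he : n - 1 - m = 0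
  · rw [he]
    simp only [pow_zero, mul_one]
    exact pow_le_pow_left₀ ht10 ht12 m
  · have hnm : n - m = (n - 1 - m) + 1 := by omega
    set e := n - 1 - m with hee
    rw [hnm, pow_succ, pow_succ] at hS
    show t1 ^ m * (1 - t1) ^ e ≤ t2 ^ m * (1 - t2) ^ e
    set X := t1 ^ m * (1 - t1) ^ e with hX
    set Y := t2 ^ m * (1 - t2) ^ e with hY
    have hY0 : 0 ≤ Y := by rw [hY]; positivity
    have hS' : X * (1 - t1) ≤ Y * (1 - t2) := by
      rw [hX, hY]; ring_nf; ring_nf at hS; linarith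
    have h12 : 1 - t2 ≤ 1 - t1 := by linarith
    rcases eq_or_lt_of_le h1t1 with h | h
    · have ht11 : t1 = 1 := by linarith
      have hXz : X = 0 := by rw [hX, ht11]; simp [zero_pow he]
      linarith
    · have hY2 : Y * (1 - t2) ≤ Y * (1 - t1) := mul_le_mul_of_nonneg_left h12 hY0
      have hXY : X * (1 - t1) ≤ Y * (1 - t1) := le_trans hS' hY2
      exact (mul_le_mul_iff_of_pos_right h).mp hXY

lemma bval (n m j : ℕ) (hn : 0 < n) (hj : j ≤ n) :
    (n.choose j : ℝ) * ((m:ℝ)/n)^j * (1 - (m:ℝ)/n)^(n-j)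
      = (n.choose j : ℝ) * ((m:ℝ)^j * ((n:ℝ)-m)^(n-j)) / (n:ℝ)^n := by
  have hnR : (0:ℝ) < n := by exact_mod_cast hn
  have h1 : 1 - (m:ℝ)/n = ((n:ℝ)-m)/n := by field_simp
  have h2 : (n:ℝ)^n = (n:ℝ)^j * (n:ℝ)^(n-j) := by
    rw [← pow_add]; congr 1; omega
  rw [h1, div_pow, div_pow, h2]
  field_simp

lemma binCore (n m : ℕ) (hm1 : 1 ≤ m) (hmn : m < n) (p : ℝ) (hp0 : 0 ≤ p)
    (hpc : p ≤ m / n) :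
    (1 : ℝ) / 2 ≤ ∑ j ∈ Finset.range (m + 1), (n.choose j : ℝ) * p ^ j * (1 - p) ^ (n - j) := by
  have hn0 : 0 < n := by omega
  have hnR : (0:ℝ) < n := by exact_mod_cast hn0
  set b : ℝ → ℕ → ℝ := fun x j => (n.choose j : ℝ) * x ^ j * (1 - x) ^ (n - j) with hb
  set U : ℝ → ℝ := fun x => ∑ j ∈ Finset.Ico (m + 1) (n + 1), b x j with hU
  set G : ℝ → ℝ := fun t => (n : ℝ) * ((n - 1).choose m) * t ^ m * (1 - t) ^ (n - 1 - m) with hG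
  have hGcont : Continuous G := by
    rw [hG]; fun_prop
  have hFTC : ∀ x y : ℝ, ∫ t in x..y, G t = U y - U x := by
    intro x y
    exact intervalIntegral.integral_eq_sub_of_hasDerivAt
      (fun t _ => sumDeriv n m hmn t) (hGcont.intervalIntegrable x y)
  have hGnonneg : ∀ t ∈ Set.Icc (0:ℝ) 1, 0 ≤ G t := by
    intro t ht
    rw [hG]
    have h1 : (0:ℝ) ≤ t := ht.1
    have h2 : (0:ℝ) ≤ 1 - t := by linarith [ht.2]
    positivity
  have htotal : ∀ x : ℝ, (∑ j ∈ Finset.range (m + 1), b x j) + U x = 1 := by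
    intro x
    rw [hU]
    simp only
    rw [Finset.sum_range_add_sum_Ico _ (by omega : m + 1 ≤ n + 1)]
    have hpow := add_pow x (1 - x) n
    simp only [add_sub_cancel, one_pow] at hpow
    rw [show ∑ j ∈ Finset.range (n + 1), b x j
        = ∑ j ∈ Finset.range (n + 1), x ^ j * (1-x) ^ (n - j) * (n.choose j : ℝ) from
      Finset.sum_congr rfl (fun j _ => by rw [hb]; ring), ← hpow]
  set c := (m:ℝ)/n with hc
  have hc0 : 0 < c := by positivity
  have hc1 : c ≤ 1 := by
    rw [hc, div_le_one hnR]
    exact_mod_cast hmn.le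
  -- monotonicity: U p ≤ U c
  have hmono : U p ≤ U c := by
    have h := hFTC p c
    have hnn : 0 ≤ ∫ t in p..c, G t := by
      apply intervalIntegral.integral_nonneg hpc
      intro u hu
      exact hGnonneg u ⟨le_trans hp0 hu.1, le_trans hu.2 hc1⟩
    linarith
  -- key: U c ≤ 1/2
  have hkey : U c ≤ 1/2 := by
    rcases le_or_gt (2 * m) n with hcase | hcase
    · -- integral reflection case
      have hU1 : U 1 = 1 := by
        simp only [hU]
        rw [Finset.sum_eq_single n]
        · simp only [hb]; simp
        · intro j hj hjn
          rw [Finset.mem_Ico] at hj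
          simp only [hb]
          simp [zero_pow (show n - j ≠ 0 by omega)]
        · intro hn'
          exfalso
          exact hn' (Finset.mem_Ico.mpr ⟨by omega, by omega⟩)
      have h2c1 : 2 * c ≤ 1 := by
        rw [hc, ← mul_div_assoc, div_le_one hnR]
        exact_mod_cast hcase
      have hU0 : U 0 = 0 := by
        simp only [hU]
        apply Finset.sum_eq_zero
        intro j hj
        rw [Finset.mem_Ico] at hj
        simp only [hb]
        simp [zero_pow (show j ≠ 0 by omega)]
      have hUc : U c = ∫ t in (0:ℝ)..c, G t := by
        have := hFTC 0 c
        linarith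
      have hrefl : ∫ t in (0:ℝ)..c, G t ≤ ∫ t in c..(2*c), G t := by
        have hL : ∫ s in (0:ℝ)..c, G (c - s) = ∫ t in (0:ℝ)..c, G t := by
          rw [intervalIntegral.integral_comp_sub_left G c]
          norm_num
        have hRt : ∫ s in (0:ℝ)..c, G (c + s) = ∫ t in c..(2*c), G t := by
          rw [intervalIntegral.integral_comp_add_left G c]
          norm_num [two_mul]
        rw [← hL, ← hRt]
        apply intervalIntegral.integral_mono_on hc0.le
          ((hGcont.comp (by fun_prop : Continuous fun s : ℝ => c - s)).intervalIntegrable _ _)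
          ((hGcont.comp (by fun_prop : Continuous fun s : ℝ => c + s)).intervalIntegrable _ _)
        intro s hs
        have hpt := refl_pt n m hm1 hcase s hs.1 (by rw [← hc]; exact hs.2)
        simp only [hG]
        calc (n:ℝ) * ((n-1).choose m : ℝ) * (c - s) ^ m * (1 - (c - s)) ^ (n - 1 - m)
            = ((n:ℝ) * ((n-1).choose m : ℝ)) * ((c - s) ^ m * (1 - (c - s)) ^ (n - 1 - m)) := by
              ring
          _ ≤ ((n:ℝ) * ((n-1).choose m : ℝ)) * ((c + s) ^ m * (1 - (c + s)) ^ (n - 1 - m)) := by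
              apply mul_le_mul_of_nonneg_left _ (by positivity)
              rw [hc]
              exact hpt
          _ = (n:ℝ) * ((n-1).choose m : ℝ) * (c + s) ^ m * (1 - (c + s)) ^ (n - 1 - m) := by
              ring
      have hint : ∀ x y : ℝ, IntervalIntegrable G MeasureTheory.volume x y :=
        fun x y => hGcont.intervalIntegrable x y
      have hadd1 : (∫ t in (0:ℝ)..c, G t) + (∫ t in c..(2*c), G t) = ∫ t in (0:ℝ)..(2*c), G t :=
        intervalIntegral.integral_add_adjacent_intervals (hint 0 c) (hint c (2*c))
      have hadd2 : (∫ t in (0:ℝ)..(2*c), G t) + (∫ t in (2*c)..1, G t) = ∫ t in (0:ℝ)..1, G t :=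
        intervalIntegral.integral_add_adjacent_intervals (hint 0 (2*c)) (hint (2*c) 1)
      have htail : 0 ≤ ∫ t in (2*c)..1, G t := by
        apply intervalIntegral.integral_nonneg h2c1
        intro u hu
        exact hGnonneg u ⟨le_trans (by positivity) hu.1, hu.2⟩
      have hfull : ∫ t in (0:ℝ)..1, G t = 1 := by
        have := hFTC 0 1
        rw [hU0, hU1] at this
        linarith
      rw [hUc]
      linarith
    · -- discrete pairing case
      have hu0 : (0:ℝ) ≤ (n:ℝ) - m := by
        have : (m:ℝ) ≤ n := by exact_mod_cast hmn.le
        linarith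
      have h1c : 0 ≤ 1 - c := by linarith
      have hbnn : ∀ j, 0 ≤ b c j := by
        intro j
        simp only [hb]
        positivity
      have hUc2 : U c = ∑ i ∈ Finset.range (n - m), b c (m + 1 + i) := by
        simp only [hU]
        rw [Finset.sum_Ico_eq_sum_range]
        have e : n + 1 - (m + 1) = n - m := by omega
        rw [e]
      have hterm : ∀ i ∈ Finset.range (n - m), b c (m + 1 + i) ≤ b c (m - i) := by
        intro i hi
        rw [Finset.mem_range] at hi
        have hp4 := pairL4 n m i (by omega) hmn hi
        simp only [hb]
        rw [hc, bval n m (m+1+i) hn0 (by omega), bval n m (m-i) hn0 (by omega)]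
        apply div_le_div_of_nonneg_right ?_ (by positivity)
        have em : (m:ℝ)^(m+1+i) = (m:ℝ)^(2*i+1) * (m:ℝ)^(m-i) := by
          rw [← pow_add]; congr 1; omega
        have eu : ((n:ℝ)-m)^(n-(m-i)) = ((n:ℝ)-m)^(2*i+1) * ((n:ℝ)-m)^(n-(m+1+i)) := by
          rw [← pow_add]; congr 1; omega
        calc (n.choose (m+1+i) : ℝ) * ((m:ℝ)^(m+1+i) * ((n:ℝ)-m)^(n-(m+1+i)))
            = ((n.choose (m+1+i) : ℝ) * (m:ℝ)^(2*i+1)) * ((m:ℝ)^(m-i) * ((n:ℝ)-m)^(n-(m+1+i))) := by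
              rw [em]; ring
          _ ≤ ((n.choose (m-i) : ℝ) * ((n:ℝ)-m)^(2*i+1)) * ((m:ℝ)^(m-i) * ((n:ℝ)-m)^(n-(m+1+i))) := by
              apply mul_le_mul_of_nonneg_right hp4 (by positivity)
          _ = (n.choose (m-i) : ℝ) * ((m:ℝ)^(m-i) * ((n:ℝ)-m)^(n-(m-i))) := by
              rw [eu]; ring
      have hinj : ∀ x ∈ Finset.range (n - m), ∀ y ∈ Finset.range (n - m),
          m - x = m - y → x = y := by
        intro a ha bb hbb hab
        rw [Finset.mem_range] at ha hbb
        omega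
      have himg : (Finset.range (n - m)).image (fun i => m - i) ⊆ Finset.range (m + 1) := by
        intro j hj
        rw [Finset.mem_image] at hj
        obtain ⟨i, hi, rfl⟩ := hj
        rw [Finset.mem_range]
        omega
      have hUB : U c ≤ ∑ j ∈ Finset.range (m + 1), b c j := by
        rw [hUc2]
        calc ∑ i ∈ Finset.range (n - m), b c (m + 1 + i)
            ≤ ∑ i ∈ Finset.range (n - m), b c (m - i) := Finset.sum_le_sum hterm
          _ = ∑ j ∈ (Finset.range (n - m)).image (fun i => m - i), b c j :=
              (Finset.sum_image hinj).symm
          _ ≤ ∑ j ∈ Finset.range (m + 1), b c j :=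
              Finset.sum_le_sum_of_subset_of_nonneg himg (fun j _ _ => hbnn j)
      have := htotal c
      linarith
  have := htotal p
  linarith [hmono, hkey]

end RealCore

section MeasurePart
open scoped Classical

variable {𝒳 : Type*} [MeasurableSpace 𝒳] (P : Measure 𝒳) [IsProbabilityMeasure P] (n : ℕ)

/-- number of sample points in A -/
noncomputable def cnt (A : Set 𝒳) (y : Fin n → 𝒳) : ℕ :=
  (Finset.univ.filter (fun i => y i ∈ A)).card

lemma cnt_le (A : Set 𝒳) (y : Fin n → 𝒳) : cnt n A y ≤ n := by
  simpa [cnt] using (Finset.card_filter_le Finset.univ (fun i => y i ∈ A))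

lemma nu_eq_cnt (A : Set 𝒳) (y : Fin n → 𝒳) :
    (∑ i, A.indicator (fun _ => (1 : ℝ)) (y i)) = (cnt n A y : ℝ) := by
  rw [cnt, ← Finset.sum_boole]
  congr 1

lemma cnt_dist (A : Set 𝒳) (hA : MeasurableSet A) (j : ℕ) :
    (Measure.pi fun _ : Fin n => P) {y | cnt n A y = j}
      = ENNReal.ofReal ((n.choose j : ℝ) * (P A).toReal ^ j * (1 - (P A).toReal) ^ (n - j)) := by
  set μn := Measure.pi fun _ : Fin n => P with hμn
  set D : Finset (Fin n) → Set (Fin n → 𝒳) :=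
    fun s => Set.univ.pi (fun i => if i ∈ s then A else Aᶜ) with hD
  have hmemD : ∀ (s : Finset (Fin n)) (y : Fin n → 𝒳),
      y ∈ D s ↔ (Finset.univ.filter (fun i => y i ∈ A)) = s := by
    intro s y
    rw [Set.mem_univ_pi]
    constructor
    · intro h
      ext i
      simp only [Finset.mem_filter, Finset.mem_univ, true_and]
      have := h i
      by_cases hi : i ∈ s <;> simp [hi] at this ⊢ <;> tauto
    · intro h i
      have : i ∈ s ↔ y i ∈ A := by rw [← h]; simp
      by_cases hi : i ∈ s <;> simp [hi] at this ⊢ <;> tauto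
  have hDmeas : ∀ s : Finset (Fin n), MeasurableSet (D s) := by
    intro s
    apply MeasurableSet.pi Set.countable_univ
    intro i _
    by_cases hi : i ∈ s <;> simp [hi, hA, hA.compl]
  have hsetEq : {y | cnt n A y = j} = ⋃ s ∈ Finset.univ.powersetCard j, D s := by
    ext y
    simp only [Set.mem_setOf_eq, Set.mem_iUnion, cnt]
    constructor
    · intro h
      exact ⟨Finset.univ.filter (fun i => y i ∈ A),
        Finset.mem_powersetCard.mpr ⟨Finset.subset_univ _, h⟩, (hmemD _ y).mpr rfl⟩
    · rintro ⟨s, hs, hy⟩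
      rw [(hmemD s y).mp hy]
      exact (Finset.mem_powersetCard.mp hs).2
  have hdisj : (↑(Finset.univ.powersetCard j : Finset (Finset (Fin n))) :
      Set (Finset (Fin n))).PairwiseDisjoint D := by
    intro s _ t _ hst
    refine Set.disjoint_left.mpr fun y hys hyt => hst ?_
    rw [← (hmemD s y).mp hys, ← (hmemD t y).mp hyt]
  have hDm : ∀ s : Finset (Fin n), s.card = j →
      μn (D s) = (P A) ^ j * (P Aᶜ) ^ (n - j) := by
    intro s hs
    rw [hD]
    simp only
    rw [hμn, Measure.pi_pi]
    rw [← Finset.prod_sdiff (Finset.subset_univ s)]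
    have h1 : ∀ i ∈ Finset.univ \ s, P (if i ∈ s then A else Aᶜ) = P Aᶜ := by
      intro i hi
      simp only [Finset.mem_sdiff] at hi
      simp [hi.2]
    have h2 : ∀ i ∈ s, P (if i ∈ s then A else Aᶜ) = P A := by
      intro i hi; simp [hi]
    rw [Finset.prod_congr rfl h1, Finset.prod_congr rfl h2, Finset.prod_const,
      Finset.prod_const, Finset.card_sdiff_of_subset (Finset.subset_univ s), hs]
    simp [mul_comm, Finset.card_univ]
  rw [hsetEq, measure_biUnion_finset hdisj (fun s _ => hDmeas s)]
  have : ∀ s ∈ Finset.univ.powersetCard j, μn (D s) = (P A) ^ j * (P Aᶜ) ^ (n - j) := by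
    intro s hs
    exact hDm s (Finset.mem_powersetCard.mp hs).2
  rw [Finset.sum_congr rfl this, Finset.sum_const, Finset.card_powersetCard, Finset.card_univ,
    Fintype.card_fin]
  set pa := (P A).toReal with hpa
  have hPA : P A = ENNReal.ofReal pa := (ENNReal.ofReal_toReal (measure_ne_top P A)).symm
  have htr : (P Aᶜ).toReal = 1 - pa := by
    rw [hpa, prob_compl_eq_one_sub hA, ENNReal.toReal_sub_of_le prob_le_one ENNReal.one_ne_top]
    simp
  have hPAc : P Aᶜ = ENNReal.ofReal (1 - pa) := by
    rw [← htr, ENNReal.ofReal_toReal (measure_ne_top P Aᶜ)]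
  have h0 : (0:ℝ) ≤ pa := ENNReal.toReal_nonneg
  have h1 : (0:ℝ) ≤ 1 - pa := by
    rw [← htr]; exact ENNReal.toReal_nonneg
  rw [nsmul_eq_mul, hPAc, hPA]
  rw [← ENNReal.ofReal_pow h0, ← ENNReal.ofReal_pow h1,
    ← ENNReal.ofReal_mul (by positivity), ← ENNReal.ofReal_natCast (n.choose j),
    ← ENNReal.ofReal_mul (by positivity), mul_assoc]

lemma cnt_meas (A : Set 𝒳) (hA : MeasurableSet A) (j : ℕ) :
    MeasurableSet {y : Fin n → 𝒳 | cnt n A y = j} := by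
  have hm : Measurable fun y : Fin n → 𝒳 => cnt n A y := by
    have : ∀ y : Fin n → 𝒳, cnt n A y = ∑ i, (if y i ∈ A then 1 else 0) := by
      intro y; simp [cnt, Finset.sum_boole]
    simp only [this]
    apply Finset.measurable_sum
    intro i _
    exact Measurable.ite ((measurable_pi_apply i) hA) measurable_const measurable_const
  exact hm (measurableSet_singleton j)

lemma half_upper (A : Set 𝒳) (hA : MeasurableSet A) (δ : ℝ) (hδ : 1 < (n : ℝ) * δ) :
    2⁻¹ ≤ (Measure.pi fun _ : Fin n => P)
      {y | ((cnt n A y : ℝ)) / n ≤ (P A).toReal + δ} := by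
  set μn := Measure.pi fun _ : Fin n => P with hμn
  set p := (P A).toReal with hp
  have h0 : (0:ℝ) ≤ p := ENNReal.toReal_nonneg
  have hnR : (0:ℝ) < n := by
    rcases Nat.eq_zero_or_pos n with h | h
    · rw [h] at hδ; norm_num at hδ
    · exact_mod_cast h
  set m := Nat.floor ((n:ℝ) * p) + 1 with hm
  have hnpm : (n:ℝ) * p < m := by
    rw [hm]; push_cast; exact Nat.lt_floor_add_one _
  have hm1 : 1 ≤ m := Nat.le_add_left 1 _
  have hmle : (m:ℝ) ≤ (n:ℝ) * p + 1 := by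
    rw [hm]; push_cast
    have := Nat.floor_le (by positivity : (0:ℝ) ≤ (n:ℝ) * p)
    linarith
  have hincl : {y : Fin n → 𝒳 | cnt n A y ≤ m} ⊆ {y | ((cnt n A y : ℝ)) / n ≤ p + δ} := by
    intro y hy
    have hy' : (cnt n A y : ℝ) ≤ m := by exact_mod_cast hy
    show (cnt n A y : ℝ) / n ≤ p + δ
    rw [div_le_iff₀ hnR]
    nlinarith [hδ, hy', hmle]
  refine le_trans ?_ (measure_mono hincl)
  by_cases hcase : n ≤ m
  · have : {y : Fin n → 𝒳 | cnt n A y ≤ m} = Set.univ := by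
      ext y; simpa using le_trans (cnt_le n A y) hcase
    rw [this, measure_univ]
    exact ENNReal.inv_le_one.mpr one_le_two
  · push_neg at hcase
    have hdecomp : {y : Fin n → 𝒳 | cnt n A y ≤ m}
        = ⋃ j ∈ Finset.range (m+1), {y | cnt n A y = j} := by
      ext y
      simp [Nat.lt_succ_iff]
    rw [hdecomp, measure_biUnion_finset ?disj (fun j _ => cnt_meas n A hA j)]
    case disj =>
      intro i _ j _ hij
      refine Set.disjoint_left.mpr fun y hyi hyj => hij ?_
      rw [← hyi, ← hyj]
    have hterm : ∀ j ∈ Finset.range (m+1), μn {y | cnt n A y = j}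
        = ENNReal.ofReal ((n.choose j : ℝ) * p ^ j * (1 - p) ^ (n - j)) := by
      intro j _; exact cnt_dist P n A hA j
    rw [Finset.sum_congr rfl hterm, ← ENNReal.ofReal_sum_of_nonneg ?nonneg]
    case nonneg =>
      intro j _
      have hp1 : p ≤ 1 := by
        rw [hp]
        exact ENNReal.toReal_le_of_le_ofReal one_pos.le (by simpa using prob_le_one (μ := P) (s := A))
      have : (0:ℝ) ≤ 1 - p := by linarith
      positivity
    have hhalf : ENNReal.ofReal ((1:ℝ)/2) = 2⁻¹ := by
      rw [ENNReal.ofReal_div_of_pos two_pos]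
      norm_num
    rw [← hhalf]
    apply ENNReal.ofReal_le_ofReal
    apply binCore n m hm1 hcase p h0
    rw [le_div_iff₀ hnR]
    linarith [hnpm]

lemma cnt_compl (A : Set 𝒳) (y : Fin n → 𝒳) : cnt n Aᶜ y = n - cnt n A y := by
  have hsum : cnt n Aᶜ y + cnt n A y = n := by
    simp only [cnt, Finset.card_filter]
    rw [← Finset.sum_add_distrib]
    trans (∑ _x : Fin n, 1)
    · exact Finset.sum_congr rfl (fun i _ => by by_cases h : y i ∈ A <;> simp [h])
    · simp
  omega

lemma half_lower (A : Set 𝒳) (hA : MeasurableSet A) (δ : ℝ) (hδ : 1 < (n : ℝ) * δ) :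
    2⁻¹ ≤ (Measure.pi fun _ : Fin n => P)
      {y | (P A).toReal - δ ≤ ((cnt n A y : ℝ)) / n} := by
  have hnR : (0:ℝ) < n := by
    rcases Nat.eq_zero_or_pos n with h | h
    · rw [h] at hδ; norm_num at hδ
    · exact_mod_cast h
  have htr : (P Aᶜ).toReal = 1 - (P A).toReal := by
    rw [prob_compl_eq_one_sub hA, ENNReal.toReal_sub_of_le prob_le_one ENNReal.one_ne_top]
    simp
  have hsets : {y : Fin n → 𝒳 | ((cnt n Aᶜ y : ℝ)) / n ≤ (P Aᶜ).toReal + δ}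
      = {y | (P A).toReal - δ ≤ ((cnt n A y : ℝ)) / n} := by
    ext y
    simp only [Set.mem_setOf_eq, htr, cnt_compl]
    have hc : (cnt n A y : ℝ) ≤ n := by exact_mod_cast cnt_le n A y
    have hcast : ((n - cnt n A y : ℕ) : ℝ) = (n : ℝ) - cnt n A y := by
      push_cast [Nat.cast_sub (cnt_le n A y)]; ring
    rw [hcast, div_le_iff₀ hnR, ← sub_nonneg, le_div_iff₀ hnR, ← sub_nonneg]
    constructor <;> intro h <;> nlinarith
  rw [← hsets]
  exact half_upper P n Aᶜ hA.compl δ hδ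

end MeasurePart

/-- Vapnik symmetrization: for `n > 2/ε`, the probability that some set
`A ∈ S` has empirical frequency deviating from `P(A)` by more than `ε` is at
most twice the probability (over a ghost sample) that some `A ∈ S` has the two
empirical frequencies deviating by more than `ε/2`. -/
theorem stmt10 (𝒳 : Type*) [MeasurableSpace 𝒳] (S : Set (Set 𝒳))
    (hS : ∀ A ∈ S, MeasurableSet A)
    (P : Measure 𝒳) [IsProbabilityMeasure P]
    (n : ℕ) (ε : ℝ) (hε : 0 < ε) (hn : 2 / ε < n)
    (ν : (Fin n → 𝒳) → Set 𝒳 → ℝ)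
    (hν : ν = fun x (A : Set 𝒳) => (∑ i, A.indicator (fun _ => (1 : ℝ)) (x i)) / n) :
    (Measure.pi fun _ : Fin n => P) {x | ∃ A ∈ S, ε < |ν x A - (P A).toReal|}
      ≤ 2 * ((Measure.pi fun _ : Fin n => P).prod (Measure.pi fun _ : Fin n => P))
          {p | ∃ A ∈ S, ε / 2 < |ν p.1 A - ν p.2 A|} := by
  classical
  subst hν
  set μn := Measure.pi fun _ : Fin n => P with hμn
  set E := {x : Fin n → 𝒳 | ∃ A ∈ S, ε < |(∑ i, A.indicator (fun _ => (1:ℝ)) (x i)) / n - (P A).toReal|} with hE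
  set F := {p : (Fin n → 𝒳) × (Fin n → 𝒳) | ∃ A ∈ S,
      ε / 2 < |(∑ i, A.indicator (fun _ => (1:ℝ)) (p.1 i)) / n - (∑ i, A.indicator (fun _ => (1:ℝ)) (p.2 i)) / n|} with hF
  have hνc : ∀ (A : Set 𝒳) (y : Fin n → 𝒳),
      (∑ i, A.indicator (fun _ => (1 : ℝ)) (y i)) / n = (cnt n A y : ℝ) / n := by
    intro A y; rw [nu_eq_cnt]
  have hnpos : (0 : ℝ) < n := lt_trans (div_pos two_pos hε) hn
  have hδ : 1 < (n : ℝ) * (ε / 2) := by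
    rw [div_lt_iff₀ hε] at hn
    nlinarith
  -- core: E is covered with margin 1/2 by sections
  have key : ∀ M : Set ((Fin n → 𝒳) × (Fin n → 𝒳)), F ⊆ M → MeasurableSet M →
      2⁻¹ * μn E ≤ (μn.prod μn) M := by
    intro M hFM hM
    have hsec : Measurable fun x => μn (Prod.mk x ⁻¹' M) :=
      measurable_measure_prodMk_left hM
    set T := {x : Fin n → 𝒳 | 2⁻¹ ≤ μn (Prod.mk x ⁻¹' M)} with hT
    have hTmeas : MeasurableSet T := hsec measurableSet_Ici
    have hET : E ⊆ T := by
      rintro x ⟨A, hAS, hdev⟩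
      have hA := hS A hAS
      set pr := (P A).toReal with hpr
      have hx01 : 0 ≤ (cnt n A x : ℝ) / n ∧ (cnt n A x : ℝ) / n ≤ 1 := by
        constructor
        · positivity
        · rw [div_le_one hnpos]
          exact_mod_cast cnt_le n A x
      rw [hνc A x] at hdev
      rcases lt_abs.mp hdev with hup | hdown
      · -- ν x A - pr > ε : use upper bound event
        refine le_trans (half_upper P n A hA (ε/2) hδ) (measure_mono ?_)
        intro y hy
        apply hFM
        refine ⟨A, hAS, ?_⟩
        rw [hνc A x, hνc A y, lt_abs]
        left
        have hy' : (cnt n A y : ℝ) / n ≤ pr + ε / 2 := hy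
        linarith
      · -- pr - ν x A > ε
        refine le_trans (half_lower P n A hA (ε/2) hδ) (measure_mono ?_)
        intro y hy
        apply hFM
        refine ⟨A, hAS, ?_⟩
        rw [hνc A x, hνc A y, lt_abs]
        right
        have hy' : pr - ε / 2 ≤ (cnt n A y : ℝ) / n := hy
        linarith
    calc 2⁻¹ * μn E ≤ 2⁻¹ * μn T := by
          exact mul_le_mul_right (measure_mono hET) _
      _ = ∫⁻ x, T.indicator (fun _ => 2⁻¹) x ∂μn := by
          rw [lintegral_indicator hTmeas, setLIntegral_const, mul_comm]
      _ ≤ ∫⁻ x, μn (Prod.mk x ⁻¹' M) ∂μn := by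
          apply lintegral_mono
          intro x
          by_cases hx : x ∈ T
          · rw [Set.indicator_of_mem hx]; exact hx
          · simp [Set.indicator_of_notMem hx]
      _ = (μn.prod μn) M := (Measure.prod_apply hM).symm
  have hhalf : 2⁻¹ * μn E ≤ (μn.prod μn) F := by
    rw [measure_eq_iInf F]
    refine le_iInf fun M => le_iInf fun hFM => le_iInf fun hM => key M hFM hM
  calc μn E = 2 * (2⁻¹ * μn E) := by
        rw [← mul_assoc, ENNReal.mul_inv_cancel (by norm_num) (by norm_num), one_mul]
    _ ≤ 2 * (μn.prod μn) F := mul_le_mul_right hhalf _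
end
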